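/- Let F be a complex Banach space, let 1 ≤ p ≤ ∞, and let f : ℝ → F' be strongly measurable with finite L^p norm (for p = ∞ this means essentially bounded). Then for every F-valued Schwartz function φ on ℝ, the dilated pairings tend to zero: ∫_ℝ ⟨f(y), φ(y/λ)⟩ dy → 0 as λ → 0 through λ ≠ 0. -/

import Mathlib

open MeasureTheory Filter ENNReal

lemma memLp_japanese (q : ℝ≥0∞) (hq : 1 ≤ q) :
    MemLp (fun y : ℝ => (1 + ‖y‖) ^ (-(2:ℝ))) q volume := by
  have hcont : Continuous (fun y : ℝ => (1 + ‖y‖) ^ (-(2:ℝ))) := by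
    apply Continuous.rpow_const (by fun_prop)
    intro x; left; positivity
  have hmeas := hcont.aestronglyMeasurable (μ := volume)
  by_cases hqt : q = ∞
  · subst hqt
    refine memLp_top_of_bound hmeas 1 (Eventually.of_forall fun y => ?_)
    rw [Real.norm_eq_abs, abs_of_nonneg (by positivity)]
    exact Real.rpow_le_one_of_one_le_of_nonpos (le_add_of_nonneg_right (norm_nonneg y)) (by norm_num)
  · refine ⟨hmeas, ?_⟩
    have hq0 : q ≠ 0 := by positivity
    rw [eLpNorm_eq_lintegral_rpow_enorm_toReal hq0 hqt]
    have ht1 : (1:ℝ) ≤ q.toReal := by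
      rw [← ENNReal.toReal_one]
      exact ENNReal.toReal_mono hqt hq
    have ht0 : 0 < q.toReal := lt_of_lt_of_le one_pos ht1
    refine ENNReal.rpow_lt_top_of_nonneg (by positivity) ?_
    have hkey : ∀ y : ℝ, ‖(1 + ‖y‖) ^ (-(2:ℝ))‖ₑ ^ q.toReal
        = ENNReal.ofReal ((1 + ‖y‖) ^ (-(2 * q.toReal))) := by
      intro y
      rw [Real.enorm_eq_ofReal (by positivity),
        ENNReal.ofReal_rpow_of_nonneg (by positivity) ht0.le,
        ← Real.rpow_mul (by positivity), neg_mul]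
    rw [lintegral_congr hkey]
    refine ne_of_lt (finite_integral_one_add_norm ?_)
    simp only [Module.finrank_self, Nat.cast_one]
    nlinarith

/-- Let `F` be a complex Banach space, `1 ≤ p ≤ ∞`, and `f : ℝ → F'` strongly
measurable with finite `L^p` norm. Then for every `F`-valued Schwartz function `φ`,
`∫ ⟨f y, φ (y/λ)⟩ dy → 0` as `λ → 0` through `λ ≠ 0`. -/
theorem lp_dual_pairing_dilate_tendsto_zero
    (F : Type*) [NormedAddCommGroup F] [NormedSpace ℂ F] [CompleteSpace F]
    (p : ℝ≥0∞) (hp : 1 ≤ p) (f : ℝ → F →L[ℂ] ℂ)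
    (hmeas : StronglyMeasurable f)
    (hf : MemLp f p volume)
    (φ : SchwartzMap ℝ F) :
    Tendsto (fun lam : ℝ => ∫ y : ℝ, f y (φ (y / lam)))
      (nhdsWithin (0 : ℝ) {0}ᶜ) (nhds 0) := by
  set l := nhdsWithin (0 : ℝ) {0}ᶜ with hl
  -- Schwartz decay bound
  set C : ℝ := 2 ^ 2 * (Finset.Iic ((2:ℕ),(0:ℕ))).sup
      (fun m => SchwartzMap.seminorm ℝ m.1 m.2) φ with hC
  have hC0 : 0 ≤ C := by positivity
  have hφ_bound : ∀ x : ℝ, ‖φ x‖ ≤ C * (1 + ‖x‖) ^ (-(2:ℝ)) := by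
    intro x
    have h := SchwartzMap.one_add_le_sup_seminorm_apply (𝕜 := ℝ) (m := ((2:ℕ),(0:ℕ)))
      (k := 2) (n := 0) le_rfl le_rfl φ x
    rw [norm_iteratedFDeriv_zero] at h
    have hpos : (0:ℝ) < (1 + ‖x‖) ^ (2:ℕ) := by positivity
    have h2 : (1 + ‖x‖) ^ (-(2:ℝ)) = ((1 + ‖x‖) ^ (2:ℕ))⁻¹ := by
      rw [← Real.rpow_natCast (1 + ‖x‖) 2, ← Real.rpow_neg (by positivity)]
      norm_num
    rw [h2, ← div_eq_mul_inv, le_div_iff₀ hpos, mul_comm]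
    exact h
  -- the dominating function
  set g : ℝ → ℝ := fun y => C * (1 + ‖y‖) ^ (-(2:ℝ)) with hg
  have hg_nonneg : ∀ y, 0 ≤ g y := fun y => by positivity
  set B : ℝ → ℝ := fun y => ‖f y‖ * g y with hB
  -- integrability of the bound
  have hq : MemLp g ((1 - 1/p)⁻¹) volume := by
    refine MemLp.const_mul ?_ C
    refine memLp_japanese _ ?_
    rw [ENNReal.one_le_inv]
    exact tsub_le_self
  have hpqr : (1:ℝ≥0∞)/1 = 1/(1 - 1/p)⁻¹ + 1/p := by
    simp only [one_div, inv_inv, inv_one]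
    rw [tsub_add_cancel_of_le (ENNReal.inv_le_one.mpr hp)]
  have hsmul : MemLp (fun y => g y • f y) 1 volume :=
    MemLp.smul hf hq (hpqr := ⟨by simpa only [one_div] using hpqr.symm⟩)
  have hB_int : Integrable B volume := by
    have := (memLp_one_iff_integrable.mp hsmul).norm
    refine this.congr (Eventually.of_forall fun y => ?_)
    show ‖g y • f y‖ = ‖f y‖ * g y
    rw [mul_comm]
    exact norm_smul_of_nonneg (hg_nonneg y) (f y)
  -- apply dominated convergence
  have h0 : Tendsto (fun lam : ℝ => ∫ y : ℝ, f y (φ (y / lam))) l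
      (nhds (∫ _ : ℝ, (0:ℂ))) := by
    apply tendsto_integral_filter_of_dominated_convergence B
    · -- measurability
      refine Eventually.of_forall fun lam => ?_
      exact (ContinuousLinearMap.apply ℂ ℂ).aestronglyMeasurable_comp₂
        (φ.continuous.comp (continuous_id.div_const lam)).aestronglyMeasurable
        hmeas.aestronglyMeasurable
    · -- domination
      have h1 : ∀ᶠ lam : ℝ in l, |lam| ≤ 1 := by
        refine Eventually.filter_mono nhdsWithin_le_nhds ?_
        have : Metric.closedBall (0:ℝ) 1 ∈ nhds (0:ℝ) :=
          Metric.closedBall_mem_nhds _ one_pos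
        filter_upwards [this] with lam hlam
        simpa [Real.dist_eq] using hlam
      have h2 : ∀ᶠ lam : ℝ in l, lam ≠ 0 :=
        eventually_mem_nhdsWithin.mono fun lam h => h
      filter_upwards [h1, h2] with lam hlam1 hlam2
      refine Eventually.of_forall fun y => ?_
      have key : ‖φ (y / lam)‖ ≤ g y := by
        refine le_trans (hφ_bound _) ?_
        refine mul_le_mul_of_nonneg_left ?_ hC0
        apply Real.rpow_le_rpow_of_nonpos (by positivity) ?_ (by norm_num)
        have hlam_pos : 0 < |lam| := abs_pos.mpr hlam2
        have : ‖y‖ ≤ ‖y / lam‖ := by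
          rw [norm_div, Real.norm_eq_abs, Real.norm_eq_abs, le_div_iff₀ hlam_pos]
          nlinarith [abs_nonneg y]
        linarith
      calc ‖f y (φ (y / lam))‖ ≤ ‖f y‖ * ‖φ (y / lam)‖ := (f y).le_opNorm _
        _ ≤ ‖f y‖ * g y := mul_le_mul_of_nonneg_left key (norm_nonneg _)
    · exact hB_int
    · -- pointwise limit
      have hae : ∀ᵐ y : ℝ ∂volume, y ≠ 0 := by
        rw [ae_iff]
        simp [Real.volume_singleton]
      filter_upwards [hae] with y hy
      have hy' : 0 < |y| := abs_pos.mpr hy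
      -- y / lam tends to cocompact
      have hnorm : Tendsto (fun lam : ℝ => ‖y / lam‖) l atTop := by
        have habs : Tendsto (fun lam : ℝ => |lam|) l (nhdsWithin 0 (Set.Ioi 0)) := by
          rw [tendsto_nhdsWithin_iff]
          constructor
          · exact ((continuous_abs.tendsto' 0 0 abs_zero).mono_left nhdsWithin_le_nhds)
          · exact eventually_mem_nhdsWithin.mono fun lam h => abs_pos.mpr h
        have hinv : Tendsto (fun lam : ℝ => |lam|⁻¹) l atTop :=
          tendsto_inv_nhdsGT_zero.comp habs
        have := hinv.const_mul_atTop hy'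
        refine this.congr fun lam => ?_
        rw [norm_div, Real.norm_eq_abs, Real.norm_eq_abs, div_eq_mul_inv]
      have hcocompact : Tendsto (fun lam : ℝ => y / lam) l (cocompact ℝ) := by
        rw [← Metric.cobounded_eq_cocompact]
        exact tendsto_norm_atTop_iff_cobounded.mp hnorm
      have hφ0 : Tendsto (fun lam : ℝ => φ (y / lam)) l (nhds 0) :=
        (zero_at_infty φ).comp hcocompact
      have := ((f y).continuous.tendsto 0).comp hφ0
      simp only [Function.comp_def, map_zero] at this
      exact this
  simpa using h0
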